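/- (Generalized Birkhoff averaging lemma) Let (X, 𝔅, μ, T) be a measure-preserving dynamical system and (f_n) a sequence of integrable functions with: (1) f_n → 0 μ-a.e. and ‖f_n‖₁ → 0; (2) sup_n |f_n| is integrable. Then (1/N) Σ_{n=0}^{N−1} f_n(T^{N−n} x) → 0 for μ-almost every x. -/

import Mathlib

open MeasureTheory Filter

section Garsia

set_option linter.unusedSectionVars false

variable {X : Type*} [MeasurableSpace X] {μ : Measure X} {T : X → X}

/-- The running maximum of Birkhoff sums: `maxS T g n x = max_{0 ≤ j ≤ n} S_j g x`. -/
noncomputable def maxS (T : X → X) (g : X → ℝ) : ℕ → X → ℝ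
  | 0 => fun _ => 0
  | n + 1 => fun x => max (maxS T g n x) (birkhoffSum T g (n + 1) x)

lemma maxS_nonneg (T : X → X) (g : X → ℝ) (n : ℕ) (x : X) : 0 ≤ maxS T g n x := by
  induction n with
  | zero => exact le_refl 0
  | succ n ih => exact le_max_of_le_left ih

lemma maxS_mono (T : X → X) (g : X → ℝ) (n : ℕ) (x : X) :
    maxS T g n x ≤ maxS T g (n + 1) x := le_max_left _ _

lemma birkhoffSum_le_maxS (T : X → X) (g : X → ℝ) {j n : ℕ} (h : j ≤ n) (x : X) :
    birkhoffSum T g j x ≤ maxS T g n x := by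
  induction n with
  | zero =>
    interval_cases j
    simp [birkhoffSum_zero, maxS]
  | succ n ih =>
    rcases Nat.lt_succ_iff_lt_or_eq.mp (Nat.lt_succ_of_le h) with h' | h'
    · exact le_trans (ih (Nat.lt_succ_iff.mp h')) (maxS_mono T g n x)
    · rw [h']; exact le_max_right _ _

lemma maxS_key (T : X → X) (g : X → ℝ) (n : ℕ) (x : X) (hpos : 0 < maxS T g n x) :
    maxS T g n x ≤ g x + maxS T g n (T x) := by
  induction n with
  | zero => exact absurd hpos (lt_irrefl 0)
  | succ n ih =>
    rcases le_total (maxS T g n x) (birkhoffSum T g (n + 1) x) with h | h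
    · have : maxS T g (n + 1) x = birkhoffSum T g (n + 1) x := max_eq_right h
      rw [this, birkhoffSum_succ' T g n x]
      exact add_le_add_right ((birkhoffSum_le_maxS T g le_rfl (T x)).trans
        (maxS_mono T g n (T x))) (g x)
    · have heq : maxS T g (n + 1) x = maxS T g n x := max_eq_left h
      rw [heq] at hpos ⊢
      exact (ih hpos).trans (add_le_add_right (maxS_mono T g n (T x)) (g x))

lemma measurable_birkhoffSum {T : X → X} (hT : Measurable T) {g : X → ℝ}
    (hg : Measurable g) (n : ℕ) : Measurable (birkhoffSum T g n) := by
  unfold birkhoffSum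
  exact Finset.measurable_sum _ fun i _ => hg.comp (hT.iterate i)

lemma measurable_maxS {T : X → X} (hT : Measurable T) {g : X → ℝ}
    (hg : Measurable g) (n : ℕ) : Measurable (maxS T g n) := by
  induction n with
  | zero => exact measurable_const
  | succ n ih => exact ih.max (measurable_birkhoffSum hT hg (n + 1))

lemma integrable_birkhoffSum (hT : MeasurePreserving T μ μ) {g : X → ℝ}
    (hg : Integrable g μ) (n : ℕ) : Integrable (birkhoffSum T g n) μ := by
  unfold birkhoffSum
  exact integrable_finset_sum _ fun i _ =>
    ((hT.iterate i).integrable_comp hg.aestronglyMeasurable).mpr hg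

lemma integrable_maxS [IsFiniteMeasure μ] (hT : MeasurePreserving T μ μ) {g : X → ℝ}
    (hg : Integrable g μ) (n : ℕ) : Integrable (maxS T g n) μ := by
  induction n with
  | zero => exact integrable_const 0
  | succ n ih =>
    have : maxS T g (n+1) = (maxS T g n) ⊔ (birkhoffSum T g (n+1)) := rfl
    rw [this]
    exact ih.sup (integrable_birkhoffSum hT hg (n+1))

lemma integral_comp_eq (hT : MeasurePreserving T μ μ) {g : X → ℝ}
    (hg : AEStronglyMeasurable g μ) : ∫ x, g (T x) ∂μ = ∫ x, g x ∂μ := by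
  conv_rhs => rw [← hT.map_eq]
  rw [integral_map hT.measurable.aemeasurable]
  rw [hT.map_eq]; exact hg

/-- Garsia's maximal ergodic lemma. -/
lemma garsia [IsFiniteMeasure μ] (hT : MeasurePreserving T μ μ) {g : X → ℝ}
    (hgm : Measurable g) (hg : Integrable g μ) (n : ℕ) :
    0 ≤ ∫ x in {x | 0 < maxS T g n x}, g x ∂μ := by
  set A : Set X := {x | 0 < maxS T g n x} with hA
  have hAm : MeasurableSet A := measurableSet_lt measurable_const (measurable_maxS hT.measurable hgm n)
  have hMi : Integrable (maxS T g n) μ := integrable_maxS hT hg n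
  have hMTi : Integrable (fun x => maxS T g n (T x)) μ :=
    (hT.integrable_comp hMi.aestronglyMeasurable).mpr hMi
  have h1 : ∫ x in A, (maxS T g n x - maxS T g n (T x)) ∂μ ≤ ∫ x in A, g x ∂μ := by
    refine setIntegral_mono_on (hMi.sub hMTi).integrableOn hg.integrableOn hAm ?_
    intro x hx
    have := maxS_key T g n x hx
    linarith
  refine le_trans ?_ h1
  rw [integral_sub hMi.integrableOn hMTi.integrableOn]
  have h2 : ∫ x in A, maxS T g n x ∂μ = ∫ x, maxS T g n x ∂μ := by
    rw [← integral_add_compl hAm hMi]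
    have : ∫ x in Aᶜ, maxS T g n x ∂μ = 0 := by
      rw [setIntegral_congr_fun hAm.compl (g := fun _ => (0:ℝ)) ?_, integral_zero]
      intro x hx
      exact le_antisymm (not_lt.mp hx) (maxS_nonneg T g n x)
    rw [this, add_zero]
  have h3 : ∫ x in A, maxS T g n (T x) ∂μ ≤ ∫ x, maxS T g n (T x) ∂μ :=
    setIntegral_le_integral hMTi (Eventually.of_forall fun x => maxS_nonneg T g n (T x))
  have h4 : ∫ x, maxS T g n (T x) ∂μ = ∫ x, maxS T g n x ∂μ :=
    integral_comp_eq hT hMi.aestronglyMeasurable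
  rw [h2]
  linarith

/-- The maximal ergodic inequality. -/
lemma maximal_ineq [IsFiniteMeasure μ] (hT : MeasurePreserving T μ μ) {g : X → ℝ}
    (hgm : Measurable g) (hg : Integrable g μ) {ε : ℝ} (hε : 0 < ε) :
    μ {x | ∃ j : ℕ, 0 < j ∧ ε * j < birkhoffSum T g j x} ≤
      ENNReal.ofReal (ε⁻¹ * ∫ x, |g x| ∂μ) := by
  set g' : X → ℝ := fun x => g x - ε with hg'
  have hg'm : Measurable g' := hgm.sub measurable_const
  have hg'i : Integrable g' μ := hg.sub (integrable_const ε)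
  have hbs : ∀ (j : ℕ) (x : X), birkhoffSum T g' j x = birkhoffSum T g j x - ε * j := by
    intro j x
    simp only [birkhoffSum, hg', Finset.sum_sub_distrib, Finset.sum_const, Finset.card_range,
      nsmul_eq_mul, mul_comm]
  have hsub : {x | ∃ j : ℕ, 0 < j ∧ ε * j < birkhoffSum T g j x} ⊆
      ⋃ n : ℕ, {x | 0 < maxS T g' n x} := by
    rintro x ⟨j, hj, hjx⟩
    refine Set.mem_iUnion.mpr ⟨j, ?_⟩
    have : 0 < birkhoffSum T g' j x := by rw [hbs]; linarith
    exact lt_of_lt_of_le this (birkhoffSum_le_maxS T g' le_rfl x)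
  refine le_trans (measure_mono hsub) ?_
  have hbound : ∀ n : ℕ, μ {x | 0 < maxS T g' n x} ≤ ENNReal.ofReal (ε⁻¹ * ∫ x, |g x| ∂μ) := by
    intro n
    set A : Set X := {x | 0 < maxS T g' n x} with hA
    have hAm : MeasurableSet A :=
      measurableSet_lt measurable_const (measurable_maxS hT.measurable hg'm n)
    have h0 := garsia hT hg'm hg'i n
    have h1 : ∫ x in A, g' x ∂μ = ∫ x in A, g x ∂μ - ε * (μ A).toReal := by
      rw [integral_sub hg.integrableOn (integrable_const ε).integrableOn]
      rw [setIntegral_const]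
      simp [smul_eq_mul, mul_comm, measureReal_def]
    have h2 : ∫ x in A, g x ∂μ ≤ ∫ x, |g x| ∂μ := by
      refine le_trans (setIntegral_mono_on hg.integrableOn hg.abs.integrableOn hAm
        fun x _ => le_abs_self _) ?_
      exact setIntegral_le_integral hg.abs (Eventually.of_forall fun x => abs_nonneg _)
    have h3 : ε * (μ A).toReal ≤ ∫ x, |g x| ∂μ := by rw [h1] at h0; linarith
    have h4 : (μ A).toReal ≤ ε⁻¹ * ∫ x, |g x| ∂μ :=
      calc (μ A).toReal = ε⁻¹ * (ε * (μ A).toReal) := by field_simp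
        _ ≤ ε⁻¹ * ∫ x, |g x| ∂μ := by
          have : (0:ℝ) ≤ ε⁻¹ := inv_nonneg.mpr hε.le
          exact mul_le_mul_of_nonneg_left h3 this
    calc μ A = ENNReal.ofReal ((μ A).toReal) := (ENNReal.ofReal_toReal (measure_ne_top μ A)).symm
      _ ≤ ENNReal.ofReal (ε⁻¹ * ∫ x, |g x| ∂μ) := ENNReal.ofReal_le_ofReal h4
  have hmono : Monotone (fun n : ℕ => {x | 0 < maxS T g' n x}) := by
    intro m n hmn x hx
    simp only [Set.mem_setOf_eq] at hx ⊢
    calc 0 < maxS T g' m x := hx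
      _ ≤ maxS T g' n x := by
        clear hx
        induction hmn with
        | refl => exact le_refl _
        | step h ih => exact ih.trans (maxS_mono T g' _ x)
  rw [Directed.measure_iUnion (Monotone.directed_le hmono)]
  exact iSup_le hbound

end Garsia

section Main

variable {X : Type*} [MeasurableSpace X] {μ : Measure X} {T : X → X}

lemma tsum_meas_Ioi_lt_top [IsProbabilityMeasure μ] {g : X → ℝ} (hg : Integrable g μ)
    (hg0 : 0 ≤ g) : (∑' j : ℕ, μ {x | g x ∈ Set.Ioi (j : ℝ)}) < ⊤ := by
  letI : MeasureSpace X := { volume := μ }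
  haveI : IsProbabilityMeasure (volume : Measure X) := ‹IsProbabilityMeasure μ›
  exact ProbabilityTheory.tsum_prob_mem_Ioi_lt_top hg hg0

/-- For integrable nonnegative `g`, `g(T^n x)/n → 0` almost everywhere. -/
lemma ae_iterate_div_tendsto [IsProbabilityMeasure μ] (hT : MeasurePreserving T μ μ)
    {g : X → ℝ} (hgm : Measurable g) (hg : Integrable g μ) (hg0 : 0 ≤ g) :
    ∀ᵐ x ∂μ, Tendsto (fun n : ℕ => g (T^[n] x) / n) atTop (nhds 0) := by
  have key : ∀ m : ℕ, ∀ᵐ x ∂μ, ∀ᶠ n : ℕ in atTop,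
      g (T^[n] x) ≤ (1 / (m + 1 : ℝ)) * n := by
    intro m
    set ε : ℝ := 1 / (m + 1 : ℝ) with hεdef
    have hε : 0 < ε := by positivity
    have hnull : μ {x | ∃ᶠ n : ℕ in atTop, ε * n < g (T^[n] x)} = 0 := by
      apply measure_setOf_frequently_eq_zero
      have hpre : ∀ n : ℕ, μ {x | ε * n < g (T^[n] x)} = μ {y | ε * n < g y} := by
        intro n
        have : {x | ε * n < g (T^[n] x)} = T^[n] ⁻¹' {y | ε * n < g y} := rfl
        rw [this]
        exact (hT.iterate n).measure_preimage
          (measurableSet_lt measurable_const hgm).nullMeasurableSet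
    -- ε * n < g y ↔ ε⁻¹ * g y ∈ Ioi n
      have hset : ∀ n : ℕ, {y | ε * n < g y} = {y | ε⁻¹ * g y ∈ Set.Ioi (n : ℝ)} := by
        intro n
        ext y
        simp only [Set.mem_setOf_eq, Set.mem_Ioi]
        constructor
        · intro h
          have := mul_lt_mul_of_pos_left h (inv_pos.mpr hε)
          rwa [← mul_assoc, inv_mul_cancel₀ hε.ne', one_mul] at this
        · intro h
          have := mul_lt_mul_of_pos_left h hε
          rwa [← mul_assoc, mul_inv_cancel₀ hε.ne', one_mul] at this
      have hsum : (∑' n : ℕ, μ {x | ε * n < g (T^[n] x)}) < ⊤ := by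
        simp only [hpre, hset]
        exact tsum_meas_Ioi_lt_top (hg.const_mul ε⁻¹)
          (fun y => mul_nonneg (inv_nonneg.mpr hε.le) (hg0 y))
      exact hsum.ne
    have hae' : ∀ᵐ x ∂μ, ¬ ∃ᶠ n : ℕ in atTop, ε * n < g (T^[n] x) := by
      rw [ae_iff]; simp only [not_not]; exact hnull
    filter_upwards [hae'] with x hx
    have := not_frequently.mp hx
    filter_upwards [this] with n hn
    exact not_lt.mp hn
  rw [← ae_all_iff] at key
  filter_upwards [key] with x hx
  rw [Metric.tendsto_atTop]
  intro ε hε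
  obtain ⟨m, hm⟩ := exists_nat_one_div_lt hε
  obtain ⟨N, hN⟩ := eventually_atTop.mp ((hx m).and (eventually_ge_atTop 1))
  refine ⟨N, fun n hn => ?_⟩
  obtain ⟨h1, h2⟩ := hN n hn
  rw [Real.dist_eq, sub_zero, abs_of_nonneg (div_nonneg (hg0 _) (Nat.cast_nonneg n))]
  have hnpos : (0:ℝ) < n := by exact_mod_cast h2
  have hle : g (T^[n] x) / n ≤ 1 / (m + 1 : ℝ) := by
    rw [div_le_iff₀ hnpos]; linarith
  exact lt_of_le_of_lt hle hm


theorem main_aux (μ : Measure X) [IsProbabilityMeasure μ] (T : X → X)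
    (hT : MeasurePreserving T μ μ) (f : ℕ → X → ℝ)
    (hm : ∀ n, Measurable (f n))
    (hint : ∀ n, Integrable (f n) μ)
    (hae : ∀ᵐ x ∂μ, Tendsto (fun n => f n x) atTop (nhds 0))
    (hsup : Integrable (fun x => ⨆ n, |f n x|) μ) :
    ∀ᵐ x ∂μ, Tendsto (fun N : ℕ =>
        (1 / (N : ℝ)) * ∑ n ∈ Finset.range N, f n (T^[N - n] x))
      atTop (nhds 0) := by
  classical
  set g : ℕ → X → ℝ := fun k x => ⨆ n, |f (k + n) x| with hgdef
  have hgm : ∀ k, Measurable (g k) := fun k => Measurable.iSup fun n => (hm (k + n)).abs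
  have hg0 : ∀ k x, 0 ≤ g k x := fun k x => Real.iSup_nonneg fun n => abs_nonneg _
  have hg0eq : (fun x => ⨆ n, |f n x|) = g 0 := by
    funext x; simp only [hgdef, zero_add]
  have htendsto_null : μ {x | ¬ Tendsto (fun n => f n x) atTop (nhds 0)} = 0 := ae_iff.mp hae
  have hBnull : μ {x | ¬ BddAbove (Set.range fun n => |f n x|)} = 0 := by
    refine measure_mono_null ?_ htendsto_null
    intro x hx ht
    exact hx ht.abs.bddAbove_range
  have hbdd_ae : ∀ᵐ y ∂μ, BddAbove (Set.range fun n => |f n y|) := by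
    rw [ae_iff]; exact hBnull
  have hiter : ∀ᵐ x ∂μ, ∀ j : ℕ, BddAbove (Set.range fun n => |f n (T^[j] x)|) := by
    rw [ae_all_iff]
    intro j
    have h0 := (hT.iterate j).quasiMeasurePreserving.preimage_null hBnull
    rw [ae_iff]
    exact h0
  have hbdd_shift : ∀ (k : ℕ) (y : X), BddAbove (Set.range fun n => |f n y|) →
      BddAbove (Set.range fun n => |f (k + n) y|) := by
    intro k y hb
    refine hb.mono ?_
    rintro a ⟨n, rfl⟩
    exact ⟨k + n, rfl⟩
  have habs : ∀ (y : X), BddAbove (Set.range fun n => |f n y|) →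
      ∀ j k : ℕ, k ≤ j → |f j y| ≤ g k y := by
    intro y hb j k hkj
    have h1 := le_ciSup (hbdd_shift k y hb) (j - k)
    rwa [Nat.add_sub_cancel' hkj] at h1
  have hgle : ∀ (k : ℕ) (y : X), BddAbove (Set.range fun n => |f n y|) → g k y ≤ g 0 y := by
    intro k y hb
    exact ciSup_le fun n => habs y hb (k + n) 0 (Nat.zero_le _)
  have hgint : ∀ k, Integrable (g k) μ := by
    intro k
    refine Integrable.mono' (hg0eq ▸ hsup) (hgm k).aestronglyMeasurable ?_
    filter_upwards [hbdd_ae] with y hb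
    rw [Real.norm_eq_abs, abs_of_nonneg (hg0 k y)]
    exact hgle k y hb
  have hgtendsto : Tendsto (fun k => ∫ x, g k x ∂μ) atTop (nhds 0) := by
    have h0 : ∫ x, (0:ℝ) ∂μ = 0 := by simp
    rw [← h0]
    refine tendsto_integral_of_dominated_convergence (g 0)
      (fun k => (hgm k).aestronglyMeasurable) (hg0eq ▸ hsup) ?_ ?_
    · intro k
      filter_upwards [hbdd_ae] with y hb
      rw [Real.norm_eq_abs, abs_of_nonneg (hg0 k y)]
      exact hgle k y hb
    · filter_upwards [hae] with y hy
      rw [Metric.tendsto_atTop]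
      intro ε hε
      obtain ⟨K, hK⟩ := (Metric.tendsto_atTop.mp hy) (ε / 2) (half_pos hε)
      refine ⟨K, fun k hk => ?_⟩
      rw [Real.dist_eq, sub_zero, abs_of_nonneg (hg0 k y)]
      have hle : g k y ≤ ε / 2 := by
        refine ciSup_le fun n => ?_
        have := hK (k + n) (le_trans hk (Nat.le_add_right _ _))
        rw [Real.dist_eq, sub_zero] at this
        exact this.le
      linarith
  have hEm : ∀ m : ℕ, μ (⋂ k : ℕ, {x | ∃ j : ℕ, 0 < j ∧
      (1 / (m + 1 : ℝ)) * j < birkhoffSum T (g k) j x}) = 0 := by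
    intro m
    have hε : (0:ℝ) < 1 / (m + 1 : ℝ) := by positivity
    have hb : ∀ k : ℕ, μ (⋂ k' : ℕ, {x | ∃ j : ℕ, 0 < j ∧
        (1 / (m + 1 : ℝ)) * j < birkhoffSum T (g k') j x}) ≤
        ENNReal.ofReal ((1 / (m + 1 : ℝ))⁻¹ * ∫ x, |g k x| ∂μ) := fun k =>
      le_trans (measure_mono (Set.iInter_subset _ k)) (maximal_ineq hT (hgm k) (hgint k) hε)
    have habs_int : ∀ k : ℕ, ∫ x, |g k x| ∂μ = ∫ x, g k x ∂μ := fun k =>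
      integral_congr_ae (Filter.Eventually.of_forall fun x => abs_of_nonneg (hg0 k x))
    have hlim : Tendsto (fun k : ℕ => ENNReal.ofReal ((1 / (m + 1 : ℝ))⁻¹ * ∫ x, |g k x| ∂μ))
        atTop (nhds 0) := by
      simp only [habs_int]
      have h1 : Tendsto (fun k : ℕ => (1 / (m + 1 : ℝ))⁻¹ * ∫ x, g k x ∂μ) atTop (nhds 0) := by
        simpa using hgtendsto.const_mul (1 / (m + 1 : ℝ))⁻¹
      simpa using ENNReal.tendsto_ofReal h1
    exact le_antisymm (ge_of_tendsto' hlim hb) (zero_le)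
  have hEm' : ∀ᵐ x ∂μ, ∀ m : ℕ, ∃ k : ℕ, ∀ j : ℕ, 0 < j →
      birkhoffSum T (g k) j x ≤ (1 / (m + 1 : ℝ)) * j := by
    rw [ae_all_iff]
    intro m
    have h0 : ∀ᵐ x ∂μ, x ∉ ⋂ k : ℕ, {x | ∃ j : ℕ, 0 < j ∧
        (1 / (m + 1 : ℝ)) * j < birkhoffSum T (g k) j x} := by
      rw [ae_iff]
      simp only [not_not, Set.setOf_mem_eq]
      exact hEm m
    filter_upwards [h0] with x hx
    simp only [Set.mem_iInter, not_forall] at hx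
    obtain ⟨k, hk⟩ := hx
    simp only [Set.mem_setOf_eq] at hk
    refine ⟨k, fun j hj => ?_⟩
    by_contra h
    exact hk ⟨j, hj, lt_of_not_ge h⟩
  have hD := ae_iterate_div_tendsto hT (hgm 0) (hgint 0) (fun x => hg0 0 x)
  filter_upwards [hiter, hEm', hD] with x hx1 hx2 hx3
  rw [NormedAddCommGroup.tendsto_nhds_zero]
  intro ε hε
  obtain ⟨m, hm'⟩ := exists_nat_one_div_lt (show (0:ℝ) < ε / 4 by linarith)
  obtain ⟨k, hk⟩ := hx2 m
  have hterm1 : Tendsto (fun N : ℕ => (1 / (N:ℝ)) * ∑ n ∈ Finset.range k, g 0 (T^[N - n] x))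
      atTop (nhds 0) := by
    have hone : ∀ n : ℕ, Tendsto (fun N : ℕ => (1 / (N:ℝ)) * g 0 (T^[N - n] x)) atTop (nhds 0) := by
      intro n
      have hcomp : Tendsto (fun N : ℕ => g 0 (T^[N - n] x) / ((N - n : ℕ) : ℝ)) atTop (nhds 0) :=
        hx3.comp (tendsto_sub_atTop_nat n)
      refine tendsto_of_tendsto_of_tendsto_of_le_of_le' tendsto_const_nhds hcomp
        (Filter.Eventually.of_forall fun N => mul_nonneg (by positivity) (hg0 0 _)) ?_
      filter_upwards [eventually_ge_atTop (n + 1)] with N hN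
      have hpos : (0:ℝ) < ((N - n : ℕ) : ℝ) := by
        have : 0 < N - n := by omega
        exact_mod_cast this
      have hle : ((N - n : ℕ) : ℝ) ≤ (N : ℝ) := by
        have : N - n ≤ N := Nat.sub_le N n
        exact_mod_cast this
      rw [one_div, inv_mul_eq_div]
      exact div_le_div_of_nonneg_left (hg0 0 _) hpos hle
    have hsum := tendsto_finset_sum (Finset.range k) (fun n _ => hone n)
    simpa [Finset.mul_sum] using hsum
  have hev1 : ∀ᶠ N : ℕ in atTop,
      (1 / (N:ℝ)) * ∑ n ∈ Finset.range k, g 0 (T^[N - n] x) < ε / 4 :=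
    hterm1.eventually_lt_const (by linarith)
  filter_upwards [hev1, eventually_ge_atTop (k + 1)] with N hN1 hN2
  have hNpos : (0:ℝ) < N := by
    have : 0 < N := by omega
    exact_mod_cast this
  have habs_sum : |∑ n ∈ Finset.range N, f n (T^[N - n] x)| ≤
      ∑ n ∈ Finset.range N, |f n (T^[N - n] x)| := Finset.abs_sum_le_sum_abs _ _
  have hkN : k ≤ N := by omega
  have hsplit : ∑ n ∈ Finset.range N, |f n (T^[N - n] x)| ≤
      (∑ n ∈ Finset.range N, g k (T^[N - n] x)) +
      ∑ n ∈ Finset.range k, g 0 (T^[N - n] x) := by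
    rw [← Finset.sum_range_add_sum_Ico _ hkN]
    have hA : ∑ n ∈ Finset.range k, |f n (T^[N - n] x)| ≤
        ∑ n ∈ Finset.range k, g 0 (T^[N - n] x) :=
      Finset.sum_le_sum fun n _ => habs _ (hx1 (N - n)) n 0 (Nat.zero_le _)
    have hB : ∑ n ∈ Finset.Ico k N, |f n (T^[N - n] x)| ≤
        ∑ n ∈ Finset.Ico k N, g k (T^[N - n] x) :=
      Finset.sum_le_sum fun n hn => habs _ (hx1 (N - n)) n k (Finset.mem_Ico.mp hn).1
    have hC : ∑ n ∈ Finset.Ico k N, g k (T^[N - n] x) ≤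
        ∑ n ∈ Finset.range N, g k (T^[N - n] x) := by
      refine Finset.sum_le_sum_of_subset_of_nonneg ?_ (fun n _ _ => hg0 k _)
      intro n hn
      rw [Finset.mem_range]
      exact (Finset.mem_Ico.mp hn).2
    linarith
  have h1 : ∑ n ∈ Finset.range N, g k (T^[N - n] x) =
      ∑ j ∈ Finset.range N, g k (T^[j + 1] x) := by
    rw [← Finset.sum_range_reflect (fun j => g k (T^[j + 1] x)) N]
    refine Finset.sum_congr rfl fun j hj => ?_
    rw [Finset.mem_range] at hj
    congr 2
    omega
  have h2 : ∑ j ∈ Finset.range N, g k (T^[j + 1] x) ≤ birkhoffSum T (g k) (N + 1) x := by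
    have hsucc := Finset.sum_range_succ' (fun j => g k (T^[j] x)) N
    have hbs : birkhoffSum T (g k) (N + 1) x = ∑ i ∈ Finset.range (N + 1), g k (T^[i] x) := rfl
    rw [hbs, hsucc]
    simp only [Function.iterate_zero_apply]
    linarith [hg0 k x]
  have hb3 : birkhoffSum T (g k) (N + 1) x ≤ (1 / (m + 1 : ℝ)) * (N + 1) :=
    le_of_le_of_eq (hk (N + 1) (Nat.succ_pos N)) (by push_cast; ring)
  have hchain : ∑ n ∈ Finset.range N, g k (T^[N - n] x) ≤ (1 / (m + 1 : ℝ)) * ((N:ℝ) + 1) := by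
    rw [h1]; exact h2.trans hb3
  have hN1' : (1:ℝ) ≤ N := by
    have : 1 ≤ N := by omega
    exact_mod_cast this
  have hmain : (1 / (N:ℝ)) * ∑ n ∈ Finset.range N, g k (T^[N - n] x) ≤ 2 * (1 / (m + 1 : ℝ)) := by
    have hmpos : (0:ℝ) < 1 / (m + 1 : ℝ) := by positivity
    have step1 : (1 / (N:ℝ)) * ∑ n ∈ Finset.range N, g k (T^[N - n] x) ≤
        (1 / (N:ℝ)) * ((1 / (m + 1 : ℝ)) * ((N:ℝ) + 1)) :=
      mul_le_mul_of_nonneg_left hchain (by positivity)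
    have step2 : (1 / (N:ℝ)) * ((1 / (m + 1 : ℝ)) * ((N:ℝ) + 1)) ≤ 2 * (1 / (m + 1 : ℝ)) := by
      rw [div_mul_eq_mul_div, one_mul, div_le_iff₀ hNpos]
      nlinarith
    linarith
  rw [Real.norm_eq_abs, abs_mul, abs_of_nonneg (by positivity : (0:ℝ) ≤ 1 / (N:ℝ))]
  calc (1 / (N:ℝ)) * |∑ n ∈ Finset.range N, f n (T^[N - n] x)|
      ≤ (1 / (N:ℝ)) * ((∑ n ∈ Finset.range N, g k (T^[N - n] x)) +
        ∑ n ∈ Finset.range k, g 0 (T^[N - n] x)) :=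
        mul_le_mul_of_nonneg_left (habs_sum.trans hsplit) (by positivity)
    _ = (1 / (N:ℝ)) * ∑ n ∈ Finset.range N, g k (T^[N - n] x) +
        (1 / (N:ℝ)) * ∑ n ∈ Finset.range k, g 0 (T^[N - n] x) := by ring
    _ < 2 * (1 / (m + 1 : ℝ)) + ε / 4 := add_lt_add_of_le_of_lt hmain hN1
    _ < ε := by linarith

end Main

/-- Generalized Birkhoff averaging lemma: if `f_n → 0` a.e., `‖f_n‖₁ → 0` and
`sup_n |f_n|` is integrable, then `(1/N) Σ_{n<N} f_n(T^{N-n} x) → 0` a.e. -/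
theorem generalized_birkhoff {X : Type*} [MeasurableSpace X]
    (μ : Measure X) [IsProbabilityMeasure μ] (T : X → X)
    (hT : MeasurePreserving T μ μ) (f : ℕ → X → ℝ)
    (hint : ∀ n, Integrable (f n) μ)
    (hae : ∀ᵐ x ∂μ, Tendsto (fun n => f n x) atTop (nhds 0))
    (hL1 : Tendsto (fun n => ∫ x, |f n x| ∂μ) atTop (nhds 0))
    (hsup : Integrable (fun x => ⨆ n, |f n x|) μ) :
    ∀ᵐ x ∂μ, Tendsto (fun N : ℕ =>
        (1 / (N : ℝ)) * ∑ n ∈ Finset.range N, f n (T^[N - n] x))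
      atTop (nhds 0) := by
  set f' : ℕ → X → ℝ := fun n => (hint n).aestronglyMeasurable.mk (f n) with hf'def
  have hm' : ∀ n, Measurable (f' n) := fun n =>
    (hint n).aestronglyMeasurable.stronglyMeasurable_mk.measurable
  have heq : ∀ n, f n =ᵐ[μ] f' n := fun n => (hint n).aestronglyMeasurable.ae_eq_mk
  have heqall : ∀ᵐ x ∂μ, ∀ n, f n x = f' n x := ae_all_iff.mpr heq
  have hint' : ∀ n, Integrable (f' n) μ := fun n => (hint n).congr (heq n)
  have hae' : ∀ᵐ x ∂μ, Tendsto (fun n => f' n x) atTop (nhds 0) := by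
    filter_upwards [hae, heqall] with x hx hx2
    exact Tendsto.congr (fun n => hx2 n) hx
  have hsup' : Integrable (fun x => ⨆ n, |f' n x|) μ := by
    refine hsup.congr ?_
    filter_upwards [heqall] with x hx
    exact iSup_congr fun n => by rw [hx n]
  have hmain := main_aux μ T hT f' hm' hint' hae' hsup'
  have hiter_eq : ∀ᵐ x ∂μ, ∀ (n j : ℕ), f n (T^[j] x) = f' n (T^[j] x) := by
    rw [ae_all_iff]
    intro n
    rw [ae_all_iff]
    intro j
    exact (hT.iterate j).quasiMeasurePreserving.ae_eq_comp (heq n)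
  filter_upwards [hmain, hiter_eq] with x hx hxe
  refine Tendsto.congr (fun N => ?_) hx
  congr 1
  exact Finset.sum_congr rfl fun n _ => (hxe n (N - n)).symm
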